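/- Let n ≥ 2, c ∈ ℂ^×, and let x = (x_2,…,x_{2n−1}) be nonzero complex numbers such that all denominators occurring below are nonzero. Then for all i, j ∈ {1,…,n} one has γ_j(e_i^c(x)) = c^{a_{ij}}·γ_j(x), where (a_{ij}) is the Cartan matrix of type A_n (a_{ii} = 2, a_{ij} = −1 if |i−j| = 1, a_{ij} = 0 otherwise). -/

import Mathlib

noncomputable section

/-- The rational maps `e_i^c` for `1 ≤ i ≤ n`:
`e_1^c` multiplies `x_{n+1}` by `c`; `e_n^c` multiplies `x_n` by `c`;
for `2 ≤ i ≤ n-1`, `e_i^c` multiplies `x_i` by `c_i` and `x_{n+i}` by `c/c_i`, where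
`c_i = c(x_i x_{n+i} + x_{i+1} x_{n+i-1})/(c x_i x_{n+i} + x_{i+1} x_{n+i-1})`. -/
def eOp (n i : ℕ) (c : ℂ) (x : ℕ → ℂ) : ℕ → ℂ :=
  if i = 1 then fun k => if k = n + 1 then c * x k else x k
  else if i = n then fun k => if k = n then c * x k else x k
  else fun k =>
    if k = i then
      (c * (x i * x (n + i) + x (i + 1) * x (n + i - 1)) /
        (c * x i * x (n + i) + x (i + 1) * x (n + i - 1))) * x k
    else if k = n + i then
      (c / (c * (x i * x (n + i) + x (i + 1) * x (n + i - 1)) /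
        (c * x i * x (n + i) + x (i + 1) * x (n + i - 1)))) * x k
    else x k

/-- The functions `γ_i` for `1 ≤ i ≤ n` (conventions `x_1 = x_{2n} = 1`). -/
def gam (n : ℕ) (x : ℕ → ℂ) (i : ℕ) : ℂ :=
  if i = 1 then x (n + 1) ^ 2 / (x 2 * x (n + 2))
  else if i = n then x n ^ 2 / (x (n - 1) * x (2 * n - 1))
  else x i ^ 2 * x (n + i) ^ 2 / (x (i - 1) * x (i + 1) * x (n + i - 1) * x (n + i + 1))

/-- The Cartan matrix of type `A_n`. -/
def cartA (i j : ℕ) : ℤ :=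
  if i = j then 2 else if i + 1 = j ∨ j + 1 = i then -1 else 0

set_option maxHeartbeats 1000000 in
/-- `γ_j(e_i^c(x)) = c^{a_{ij}}·γ_j(x)` for all `1 ≤ i, j ≤ n`. -/
theorem stmt5 (n : ℕ) (hn : 2 ≤ n) (c : ℂ) (hc : c ≠ 0) (x : ℕ → ℂ)
    (hx : ∀ k, 1 ≤ k → k ≤ 2 * n → x k ≠ 0)
    (hx1 : x 1 = 1) (hx2n : x (2 * n) = 1)
    (hden : ∀ i, 2 ≤ i → i ≤ n - 1 →
      c * x i * x (n + i) + x (i + 1) * x (n + i - 1) ≠ 0)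
    (hnum : ∀ i, 2 ≤ i → i ≤ n - 1 →
      x i * x (n + i) + x (i + 1) * x (n + i - 1) ≠ 0) :
    ∀ i j, 1 ≤ i → i ≤ n → 1 ≤ j → j ≤ n →
      gam n (eOp n i c x) j = c ^ (cartA i j) * gam n x j := by
  intro i j hi1 hin hj1 hjn
  by_cases hI1 : i = 1
  · subst hI1
    have hy : ∀ k, eOp n 1 c x k = if k = n + 1 then c * x k else x k := fun k => by
      simp [eOp]
    simp only [gam, hy, cartA]
    split_ifs <;> first
      | (exfalso; omega)
      | (rw [zpow_two]; ring)
      | (rw [zpow_neg_one]; ring)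
      | (rw [zpow_zero]; ring)
  · by_cases hIn : i = n
    · subst hIn
      have hy : ∀ k, eOp i i c x k = if k = i then c * x k else x k := fun k => by
        simp [eOp, hI1]
      simp only [gam, hy, cartA]
      split_ifs <;> first
        | (exfalso; omega)
        | (rw [zpow_two]; ring)
        | (rw [zpow_neg_one]; ring)
        | (rw [zpow_zero]; ring)
    · have hi2 : 2 ≤ i := by omega
      have hin2 : i ≤ n - 1 := by omega
      obtain ⟨e, he, hy⟩ : ∃ e : ℂ, e ≠ 0 ∧ ∀ k, eOp n i c x k =
          if k = i then e * x k else if k = n + i then (c / e) * x k else x k :=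
        ⟨_, div_ne_zero (mul_ne_zero hc (hnum i hi2 hin2)) (hden i hi2 hin2),
          fun k => by simp [eOp, hI1, hIn]⟩
      have hyk : ∀ k, k ≠ i → k ≠ n + i → eOp n i c x k = x k := fun k h1 h2 => by
        rw [hy k, if_neg h1, if_neg h2]
      have hyi : ∀ k, k = i → eOp n i c x k = e * x k := fun k hk => by
        rw [hy k, if_pos hk]
      have hyni : ∀ k, k = n + i → eOp n i c x k = (c / e) * x k := fun k hk => by
        rw [hy k, if_neg (by omega), if_pos hk]
      by_cases hJi : j = i
      · have hg : cartA i j = 2 := by unfold cartA; rw [if_pos (by omega)]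
        simp only [gam, if_neg (show ¬ j = 1 by omega), if_neg (show ¬ j = n by omega)]
        rw [hyi j (by omega), hyni (n + j) (by omega), hyk (j - 1) (by omega) (by omega),
          hyk (j + 1) (by omega) (by omega), hyk (n + j - 1) (by omega) (by omega),
          hyk (n + j + 1) (by omega) (by omega), hg, zpow_two,
          show (e * x j) ^ 2 * (c / e * x (n + j)) ^ 2 = (c * c) * (x j ^ 2 * x (n + j) ^ 2) by
            field_simp]
        ring
      · by_cases hJ2 : i = j + 1
        · have hg : cartA i j = -1 := by
            unfold cartA; rw [if_neg (by omega), if_pos (by omega)]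
          by_cases hJ1 : j = 1
          · simp only [gam, if_pos hJ1]
            rw [hyk (n + 1) (by omega) (by omega), hyi 2 (by omega), hyni (n + 2) (by omega),
              hg, zpow_neg_one,
              show e * x 2 * (c / e * x (n + 2)) = c * (x 2 * x (n + 2)) by field_simp]
            ring
          · simp only [gam, if_neg hJ1, if_neg (show ¬ j = n by omega)]
            rw [hyk j (by omega) (by omega), hyk (n + j) (by omega) (by omega),
              hyk (j - 1) (by omega) (by omega), hyi (j + 1) (by omega),
              hyk (n + j - 1) (by omega) (by omega), hyni (n + j + 1) (by omega),
              hg, zpow_neg_one,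
              show x (j - 1) * (e * x (j + 1)) * x (n + j - 1) * (c / e * x (n + j + 1)) =
                c * (x (j - 1) * x (j + 1) * x (n + j - 1) * x (n + j + 1)) by
                field_simp]
            ring
        · by_cases hJ3 : j = i + 1
          · have hg : cartA i j = -1 := by
              unfold cartA; rw [if_neg (by omega), if_pos (by omega)]
            by_cases hJn : j = n
            · simp only [gam, if_neg (show ¬ j = 1 by omega), if_pos hJn]
              rw [hyk n (by omega) (by omega), hyi (n - 1) (by omega),
                hyni (2 * n - 1) (by omega), hg, zpow_neg_one,
                show e * x (n - 1) * (c / e * x (2 * n - 1)) =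
                  c * (x (n - 1) * x (2 * n - 1)) by field_simp]
              ring
            · simp only [gam, if_neg (show ¬ j = 1 by omega), if_neg hJn]
              rw [hyk j (by omega) (by omega), hyk (n + j) (by omega) (by omega),
                hyi (j - 1) (by omega), hyk (j + 1) (by omega) (by omega),
                hyni (n + j - 1) (by omega), hyk (n + j + 1) (by omega) (by omega),
                hg, zpow_neg_one,
                show e * x (j - 1) * x (j + 1) * (c / e * x (n + j - 1)) * x (n + j + 1) =
                  c * (x (j - 1) * x (j + 1) * x (n + j - 1) * x (n + j + 1)) by
                  field_simp]
              ring
          · have hg : cartA i j = 0 := by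
              unfold cartA; rw [if_neg (by omega), if_neg (by omega)]
            rw [hg, zpow_zero, one_mul]
            by_cases hJ1 : j = 1
            · simp only [gam, if_pos hJ1]
              rw [hyk (n + 1) (by omega) (by omega), hyk 2 (by omega) (by omega),
                hyk (n + 2) (by omega) (by omega)]
            · by_cases hJn : j = n
              · simp only [gam, if_neg hJ1, if_pos hJn]
                rw [hyk n (by omega) (by omega), hyk (n - 1) (by omega) (by omega),
                  hyk (2 * n - 1) (by omega) (by omega)]
              · simp only [gam, if_neg hJ1, if_neg hJn]
                rw [hyk j (by omega) (by omega), hyk (n + j) (by omega) (by omega),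
                  hyk (j - 1) (by omega) (by omega), hyk (j + 1) (by omega) (by omega),
                  hyk (n + j - 1) (by omega) (by omega),
                  hyk (n + j + 1) (by omega) (by omega)]
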